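/- (Correctness of the SB-to-SBMOD reduction, Lemma 2.) Let S be an n×m Boolean matrix and k a positive integer. There exist an (n+2)×(k+2) Boolean matrix Ē and a (k+2)×(m+2) Boolean matrix P̄ with S̄ = Ē·P̄ if and only if there exist an n×k Boolean matrix E and a k×m Boolean matrix P with S = E·P. -/

import Mathlib

/-- Boolean matrix product: `(bmul E P) i j = true` iff there exists `a`
with `E i a = true` and `P a j = true`. -/
def bmul {n k m : ℕ} (E : Fin n → Fin k → Bool) (P : Fin k → Fin m → Bool) :
    Fin n → Fin m → Bool :=
  fun i j => decide (∃ a : Fin k, E i a = true ∧ P a j = true)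

/-- Correctness of the SB-to-SBMOD reduction (Lemma 2).  Here `Sbar` is the bordered
matrix of `S` (0-based indexing: row/column `0` is the all-true border row/column,
row/column `1` is the border row/column that is false except for its first entry, and
the bottom-right `n×m` block is `S`).  The bordered matrix `Sbar` admits a Boolean
factorization into an `(n+2)×(k+2)` and a `(k+2)×(m+2)` matrix iff `S` admits a
Boolean factorization into an `n×k` and a `k×m` matrix. -/
theorem sb_iff_sbmod {n m k : ℕ} (hk : 0 < k) (S : Fin n → Fin m → Bool)
    (Sbar : Fin (n + 2) → Fin (m + 2) → Bool)
    (hb1 : ∀ j, Sbar 0 j = true)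
    (hb2 : ∀ i, Sbar i 0 = true)
    (hb3 : ∀ j : Fin (m + 2), 1 ≤ (j : ℕ) → Sbar 1 j = false)
    (hb4 : ∀ i : Fin (n + 2), 1 ≤ (i : ℕ) → Sbar i 1 = false)
    (hb5 : ∀ (i : Fin n) (j : Fin m), Sbar i.succ.succ j.succ.succ = S i j) :
    (∃ (Ebar : Fin (n + 2) → Fin (k + 2) → Bool)
       (Pbar : Fin (k + 2) → Fin (m + 2) → Bool), Sbar = bmul Ebar Pbar) ↔
    (∃ (E : Fin n → Fin k → Bool) (P : Fin k → Fin m → Bool), S = bmul E P) := by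
  constructor
  · rintro ⟨Eb, Pb, h⟩
    have h10 : ∃ c, Eb 1 c = true ∧ Pb c 0 = true := by
      have := hb2 1; rw [h] at this; simpa [bmul] using this
    obtain ⟨c0, hE1c0, hPc00⟩ := h10
    have h01 : ∃ c, Eb 0 c = true ∧ Pb c 1 = true := by
      have := hb1 1; rw [h] at this; simpa [bmul] using this
    obtain ⟨c1, hE0c1, hPc11⟩ := h01
    have hPc0 : ∀ j : Fin (m+2), 1 ≤ (j:ℕ) → Pb c0 j = false := by
      intro j hj
      have := hb3 j hj; rw [h] at this
      simp only [bmul, decide_eq_false_iff_not, not_exists, not_and] at this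
      simpa using this c0 hE1c0
    have hEc1 : ∀ i : Fin (n+2), 1 ≤ (i:ℕ) → Eb i c1 = false := by
      intro i hi
      have := hb4 i hi; rw [h] at this
      simp only [bmul, decide_eq_false_iff_not, not_exists, not_and] at this
      by_contra hc
      have hEt : Eb i c1 = true := by
        cases hx : Eb i c1 with
        | false => exact absurd hx hc
        | true => rfl
      exact (this c1 hEt) hPc11
    have hne : c0 ≠ c1 := by
      intro e
      have := hPc0 1 (by simp)
      rw [e, hPc11] at this
      simp at this
    classical
    set s : Finset (Fin (k+2)) := {c0, c1}ᶜ with hs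
    have hcard : s.card = k := by
      have h2 : ({c0, c1} : Finset (Fin (k+2))).card = 2 := by
        rw [Finset.card_insert_of_notMem (by simpa using hne), Finset.card_singleton]
      rw [hs, Finset.card_compl, h2, Fintype.card_fin]
      omega
    let e : s ≃ Fin k := s.equivFin.trans (finCongr hcard)
    refine ⟨fun i a => Eb i.succ.succ ((e.symm a : s) : Fin (k+2)),
            fun a j => Pb ((e.symm a : s) : Fin (k+2)) j.succ.succ, ?_⟩
    funext i j
    rw [← hb5 i j, h]
    simp only [bmul]
    rw [decide_eq_decide]
    constructor
    · rintro ⟨c, hEc, hPc⟩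
      have hc0 : c ≠ c0 := by
        intro hcc; subst hcc
        have := hPc0 _ (show 1 ≤ ((j.succ.succ : Fin (m+2)) : ℕ) by simp [Fin.val_succ])
        rw [hPc] at this; simp at this
      have hc1 : c ≠ c1 := by
        intro hcc; subst hcc
        have := hEc1 _ (show 1 ≤ ((i.succ.succ : Fin (n+2)) : ℕ) by simp [Fin.val_succ])
        rw [hEc] at this; simp at this
      have hm : c ∈ s := by simp [hs, hc0, hc1]
      refine ⟨e ⟨c, hm⟩, ?_, ?_⟩ <;> simp [hEc, hPc]
    · rintro ⟨a, hEa, hPa⟩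
      exact ⟨_, hEa, hPa⟩
  · rintro ⟨E, P, h⟩
    refine ⟨fun i => Fin.cases (fun c => decide (c = 0))
        (fun i' => Fin.cases (fun c => decide (c = 1))
          (fun i'' c => Fin.cases false (fun c' => Fin.cases true (fun a => E i'' a) c') c) i') i,
      fun c => Fin.cases (fun _ => true)
        (fun c' => Fin.cases (fun j => decide (j = 0))
          (fun a j => Fin.cases true (fun j' => Fin.cases false (fun j'' => P a j'') j') j) c') c,
      ?_⟩
    funext i j
    induction i using Fin.cases with
    | zero =>
      rw [hb1]
      symm
      simp only [bmul, Fin.cases_zero, decide_eq_true_eq]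
      exact ⟨0, by simp, by simp only [Fin.cases_zero]⟩
    | succ i' =>
      induction i' using Fin.cases with
      | zero =>
        have hrow : ∀ jj, Sbar (Fin.succ (0 : Fin (n+1))) jj = Sbar 1 jj := by
          rw [Fin.succ_zero_eq_one]; intro jj; rfl
        simp only [bmul, Fin.cases_succ, Fin.cases_zero]
        induction j using Fin.cases with
        | zero =>
          rw [hrow, hb2]
          symm
          refine decide_eq_true ⟨Fin.succ 0, by simp [Fin.succ_zero_eq_one], ?_⟩
          simp only [Fin.cases_succ, Fin.cases_zero]
          simp
        | succ j' =>
          rw [hrow, hb3 _ (by simp [Fin.val_succ])]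
          symm
          apply decide_eq_false; simp only [not_exists, not_and]
          intro c hc hP
          rw [decide_eq_true_eq] at hc
          subst hc
          rw [← Fin.succ_zero_eq_one] at hP
          simp only [Fin.cases_succ, Fin.cases_zero, decide_eq_true_eq] at hP
          exact Fin.succ_ne_zero _ hP
      | succ i'' =>
        simp only [bmul, Fin.cases_succ]
        induction j using Fin.cases with
        | zero =>
          rw [hb2]
          symm
          refine decide_eq_true ⟨Fin.succ 0, ?_, ?_⟩
          · simp only [Fin.cases_succ, Fin.cases_zero]
          · simp only [Fin.cases_succ, Fin.cases_zero]
            simp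
        | succ j' =>
          induction j' using Fin.cases with
          | zero =>
            have hS : Sbar i''.succ.succ (Fin.succ (0 : Fin (m+1))) = false := by
              rw [Fin.succ_zero_eq_one]; exact hb4 _ (by simp [Fin.val_succ])
            rw [hS]
            symm
            apply decide_eq_false; simp only [not_exists, not_and]
            intro c hE hP
            induction c using Fin.cases with
            | zero => simp at hE
            | succ c' =>
              induction c' using Fin.cases with
              | zero =>
                simp only [Fin.cases_succ, Fin.cases_zero, decide_eq_true_eq] at hP
                exact Fin.succ_ne_zero _ hP
              | succ a =>
                simp only [Fin.cases_succ] at hP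
                simp at hP
          | succ j'' =>
            rw [hb5, h]
            simp only [bmul]
            refine decide_eq_decide.mpr ?_
            constructor
            · rintro ⟨a, hE, hP⟩
              exact ⟨Fin.succ (Fin.succ a), by simp [hE], by simp [hP]⟩
            · rintro ⟨c, hE, hP⟩
              induction c using Fin.cases with
              | zero => simp at hE
              | succ c' =>
                induction c' using Fin.cases with
                | zero =>
                  simp only [Fin.cases_succ, Fin.cases_zero, decide_eq_true_eq] at hP
                  exact absurd hP (Fin.succ_ne_zero _)
                | succ a =>
                  simp only [Fin.cases_succ] at hE hP
                  exact ⟨a, hE, hP⟩
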